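/- Let (A, ⋆, ∘) be a pre-left Leibniz algebra and let • be the associated left Leibniz product u•v = u⋆v + v∘u. Then the pair of maps u ↦ L⋆_u and u ↦ L∘_u satisfies: L⋆_{u•v} = [L⋆_u, L⋆_v], L∘_{u•v} = L⋆_u∘L∘_v + L∘_v∘L∘_u, and L∘_{u•v} = [L⋆_u, L∘_v], for all u,v ∈ A (i.e., (L⋆, L∘) is a left representation of (A, •) on A). -/
import Mathlib


/-- For a pre-left Leibniz algebra, (L⋆, L∘) is a left representation of the
associated left Leibniz algebra on itself. -/
theorem preLeibniz_left_representation
    {K A : Type*} [Field K] [AddCommGroup A] [Module K A]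
    (starP circP : A →ₗ[K] A →ₗ[K] A)
    (h1 : ∀ u v w : A,
      starP (starP u v) w - starP u (starP v w)
        = -(starP (circP v u) w + starP v (starP u w)))
    (h2 : ∀ u v w : A,
      circP (starP u v) w - starP u (circP v w)
        = -(circP (circP v u) w - circP v (circP u w)))
    (h3 : ∀ u v w : A, circP u (circP v w) = -(circP u (starP v w)))
    (bullet : A → A → A)
    (hbullet : ∀ u v : A, bullet u v = starP u v + circP v u) :
    (∀ u v : A, starP (bullet u v) = starP u ∘ₗ starP v - starP v ∘ₗ starP u) ∧
    (∀ u v : A, circP (bullet u v) = starP u ∘ₗ circP v + circP v ∘ₗ circP u) ∧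
    (∀ u v : A, circP (bullet u v) = starP u ∘ₗ circP v - circP v ∘ₗ starP u) := by
  refine ⟨fun u v => ?_, fun u v => ?_, fun u v => ?_⟩ <;>
    ext w <;>
    simp only [hbullet, map_add, LinearMap.add_apply, LinearMap.comp_apply,
      LinearMap.sub_apply]
  · have H := h1 u v w
    rw [← sub_eq_zero] at H ⊢
    rw [← H]; abel
  · have H := h2 u v w
    rw [← sub_eq_zero] at H ⊢
    rw [← H]; abel
  · have H := h2 u v w
    rw [h3 v u w] at H
    rw [← sub_eq_zero] at H ⊢
    rw [← H]; abel
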